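/- In Setting B, for every subset J ⊆ {1,…,m} one has the equality of subsets of ℝ^n: Γ_J = Γ_{{1,…,m}} + G_J, where the right-hand side is the Minkowski sum {γ + g : γ ∈ Γ_{{1,…,m}}, g ∈ G_J}. -/

import Mathlib

open Matrix Pointwise

/-- The subgroup `ℤ^n ⊆ ℝ^n` of vectors with integer coordinates. -/
def intLattice (n : ℕ) : AddSubgroup (Fin n → ℝ) where
  carrier := {x | ∀ i, ∃ z : ℤ, x i = (z : ℝ)}
  zero_mem' := fun i => ⟨0, by simp⟩
  add_mem' := by
    intro a b ha hb i
    obtain ⟨z, hz⟩ := ha i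
    obtain ⟨w, hw⟩ := hb i
    exact ⟨z + w, by simp [hz, hw]⟩
  neg_mem' := by
    intro a ha i
    obtain ⟨z, hz⟩ := ha i
    exact ⟨-z, by simp [hz]⟩

/-- The subgroup `{x ∈ ℝ^n | ⟨x, vᵢ⟩ = 0 for all i ∈ I}`. -/
def perpSubgroup {n m : ℕ} (v : Fin m → (Fin n → ℝ)) (I : Finset (Fin m)) :
    AddSubgroup (Fin n → ℝ) where
  carrier := {x | ∀ i ∈ I, x ⬝ᵥ v i = 0}
  zero_mem' := by
    intro i _
    simp
  add_mem' := by
    intro a b ha hb i hi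
    rw [add_dotProduct, ha i hi, hb i hi, add_zero]
  neg_mem' := by
    intro a ha i hi
    rw [neg_dotProduct, ha i hi, neg_zero]


lemma gammaAux_rat_int (q : ℚ) (d : ℕ) (h : q.den ∣ d) : ∃ z : ℤ, (d:ℚ) * q = (z:ℚ) := by
  obtain ⟨k, hk⟩ := h
  refine ⟨k * q.num, ?_⟩
  rw [hk]
  push_cast
  rw [mul_comm (q.den:ℚ) (k:ℚ), mul_assoc, Rat.den_mul_eq_num]

lemma gammaAux_exists_neg (n m : ℕ) (v : Fin m → (Fin n → ℝ))
    (hindep : LinearIndependent ℝ v)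
    (hint : ∀ i j, ∃ z : ℤ, v i j = (z : ℝ)) (J : Finset (Fin m)) :
    ∃ (g : Fin n → ℝ) (d : ℕ), 0 < d ∧ (∀ j, ∃ z : ℤ, g j = (z:ℝ)) ∧
      (∀ i ∈ J, g ⬝ᵥ v i = 0) ∧ (∀ k, k ∉ J → g ⬝ᵥ v k = -(d:ℝ)) := by
  classical
  obtain ⟨vz, hvz⟩ : ∃ vz : Fin m → Fin n → ℤ, ∀ i j, v i j = ((vz i j : ℤ) : ℝ) :=
    ⟨fun i j => (hint i j).choose, fun i j => (hint i j).choose_spec⟩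
  set vq : Fin m → Fin n → ℚ := fun i j => ((vz i j : ℤ) : ℚ) with hvqdef
  have hvq : ∀ i j, v i j = ((vq i j : ℚ) : ℝ) := by intro i j; simp [hvqdef, hvz i j]
  set Bq : Matrix (Fin m) (Fin m) ℚ := Matrix.of (fun i j => vq i ⬝ᵥ vq j) with hBq
  set Br : Matrix (Fin m) (Fin m) ℝ := Matrix.of (fun i j => v i ⬝ᵥ v j) with hBr
  have hmap : Bq.map (Rat.cast : ℚ → ℝ) = Br := by
    ext i j
    simp only [Matrix.map_apply, hBq, hBr, Matrix.of_apply, dotProduct]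
    push_cast
    exact Finset.sum_congr rfl fun k _ => by rw [hvq i k, hvq j k]
  -- det over ℝ nonzero
  have hdetR : Br.det ≠ 0 := by
    set A : Matrix (Fin m) (Fin n) ℝ := Matrix.of v with hA
    have hAA : Br = A * Aᵀ := by
      ext i j; simp [Matrix.mul_apply, hA, hBr, dotProduct]
    intro hdet
    obtain ⟨c, hc0, hc⟩ := Matrix.exists_mulVec_eq_zero_iff.mpr hdet
    rw [hAA, ← Matrix.mulVec_mulVec, Matrix.mulVec_transpose] at hc
    have h2 : (c ᵥ* A) ⬝ᵥ (c ᵥ* A) = 0 := by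
      have := congrArg (fun y => c ⬝ᵥ y) hc
      simpa [Matrix.dotProduct_mulVec] using this
    have h3 : c ᵥ* A = 0 := dotProduct_self_eq_zero.mp h2
    have h4 : ∑ i, c i • v i = 0 := by
      funext j
      have := congrFun h3 j
      simpa [Matrix.vecMul, dotProduct, hA, Finset.sum_apply] using this
    exact hc0 (funext fun i => Fintype.linearIndependent_iff.mp hindep c h4 i)
  have hdetQ : Bq.det ≠ 0 := by
    intro h0
    apply hdetR
    rw [← hmap, show Bq.map (Rat.cast : ℚ → ℝ) = (Rat.castHom ℝ).mapMatrix Bq by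
      rw [RingHom.mapMatrix_apply]; rfl, ← RingHom.map_det]
    simp [h0]
  set t : Fin m → ℚ := fun k => if k ∈ J then 0 else -1 with ht
  set c : Fin m → ℚ := Bq⁻¹ *ᵥ t with hc
  have hBc : Bq *ᵥ c = t := by
    rw [hc, Matrix.mulVec_mulVec, Matrix.mul_nonsing_inv Bq (isUnit_iff_ne_zero.mpr hdetQ),
      Matrix.one_mulVec]
  set qw : Fin n → ℚ := fun j => ∑ i, c i * vq i j with hqw
  set d : ℕ := ∏ j : Fin n, (qw j).den with hd
  have hdpos : 0 < d := Finset.prod_pos fun j _ => (qw j).pos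
  set g : Fin n → ℝ := fun j => (((d:ℚ) * qw j : ℚ) : ℝ) with hg
  have hgint : ∀ j, ∃ z : ℤ, g j = (z:ℝ) := by
    intro j
    obtain ⟨z, hz⟩ := gammaAux_rat_int (qw j) d (Finset.dvd_prod_of_mem _ (Finset.mem_univ j))
    refine ⟨z, ?_⟩
    show (((d:ℚ) * qw j : ℚ) : ℝ) = (z:ℝ)
    exact_mod_cast hz
  have hkey : ∀ k, g ⬝ᵥ v k = (((d:ℚ) * t k : ℚ) : ℝ) := by
    intro k
    have hsum : ∑ j, qw j * vq k j = t k := by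
      calc ∑ j, qw j * vq k j = ∑ j, ∑ i, c i * vq i j * vq k j := by
            simp [hqw, Finset.sum_mul]
        _ = ∑ i, ∑ j, c i * vq i j * vq k j := Finset.sum_comm
        _ = ∑ i, (vq k ⬝ᵥ vq i) * c i := by
            refine Finset.sum_congr rfl fun i _ => ?_
            rw [dotProduct, Finset.sum_mul]
            exact Finset.sum_congr rfl fun j _ => by ring
        _ = (Bq *ᵥ c) k := by simp [Matrix.mulVec, dotProduct, hBq]
        _ = t k := by rw [hBc]
    calc g ⬝ᵥ v k = ∑ j, (((d:ℚ) * qw j : ℚ):ℝ) * ((vq k j : ℚ):ℝ) := by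
          simp [dotProduct, hg]
          exact Finset.sum_congr rfl fun j _ => by rw [hvq k j]
      _ = (((∑ j, (d:ℚ) * qw j * vq k j : ℚ)):ℝ) := by push_cast; ring_nf
      _ = (((d:ℚ) * t k : ℚ) : ℝ) := by
          have h5 : ∑ j, (d:ℚ) * qw j * vq k j = (d:ℚ) * t k := by
            rw [← hsum, Finset.mul_sum]
            exact Finset.sum_congr rfl fun j _ => (mul_assoc _ _ _)
          exact congrArg (fun q : ℚ => (q:ℝ)) h5
  refine ⟨g, d, hdpos, hgint, ?_, ?_⟩
  · intro i hi
    rw [hkey i, ht]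
    simp [hi]
  · intro k hk
    rw [hkey k, ht]
    simp [hk]

/-- Setting B (gluing identity): with `C_{J,I}` the relative interiors of the faces
`τ_J^∨ ∩ τ_I^⊥`, groups `G_I` with `G_∅ = ℤ^n` and `G_{I'}` of finite index in
`G_I ∩ {⟨·,vᵢ⟩ = 0, i ∈ I'}` whenever `I ⊆ I'`, and
`Γ_J = ⋃_{I ⊆ J} (G_I ∩ C_{J,I})`, one has `Γ_J = Γ_{{1,…,m}} + G_J` for every `J`. -/
theorem gamma_face_eq_gamma_add_group (n m : ℕ) (hn : 1 ≤ n)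
    (v : Fin m → (Fin n → ℝ))
    (hindep : LinearIndependent ℝ v)
    (hint : ∀ i j, ∃ z : ℤ, v i j = (z : ℝ))
    (C : Finset (Fin m) → Finset (Fin m) → Set (Fin n → ℝ))
    (hC : ∀ J I : Finset (Fin m), I ⊆ J →
      C J I = {x | (∀ i ∈ I, x ⬝ᵥ v i = 0) ∧ (∀ j ∈ J \ I, 0 < x ⬝ᵥ v j)})
    (G : Finset (Fin m) → AddSubgroup (Fin n → ℝ))
    (hGbot : G ∅ = intLattice n)
    (hGle : ∀ I I' : Finset (Fin m), I ⊆ I' → G I' ≤ G I ⊓ perpSubgroup v I')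
    (hGfin : ∀ I I' : Finset (Fin m), I ⊆ I' →
      ((G I').addSubgroupOf (G I ⊓ perpSubgroup v I')).FiniteIndex)
    (Γ : Finset (Fin m) → Set (Fin n → ℝ))
    (hΓ : ∀ J : Finset (Fin m),
      Γ J = ⋃ I ∈ {I : Finset (Fin m) | I ⊆ J}, ((G I : Set (Fin n → ℝ)) ∩ C J I)) :
    ∀ J : Finset (Fin m), Γ J = Γ Finset.univ + (G J : Set (Fin n → ℝ)) := by
  classical
  intro J
  obtain ⟨g0, d, hdpos, hg0int, hg0J, hg0neg⟩ := gammaAux_exists_neg n m v hindep hint J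
  have hg0mem : g0 ∈ G ∅ ⊓ perpSubgroup v J := by
    refine ⟨?_, ?_⟩
    · rw [hGbot]; exact hg0int
    · exact hg0J
  haveI := hGfin ∅ J (Finset.empty_subset J)
  set K := G ∅ ⊓ perpSubgroup v J with hK
  set N := ((G J).addSubgroupOf K).index with hN
  have hNpos : 0 < N :=
    Nat.pos_of_ne_zero (AddSubgroup.FiniteIndex.index_ne_zero (H := (G J).addSubgroupOf K))
  set h : Fin n → ℝ := N • g0 with hh
  have hhGJ : h ∈ G J := by
    have h1 := AddSubgroup.nsmul_index_mem ((G J).addSubgroupOf K) ⟨g0, hg0mem⟩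
    rw [AddSubgroup.mem_addSubgroupOf] at h1
    simpa [hh, hN] using h1
  set M : ℕ := N * d with hM
  have hMpos : 0 < M := Nat.mul_pos hNpos hdpos
  have hdot : ∀ w : Fin n → ℝ, h ⬝ᵥ w = (N : ℝ) * (g0 ⬝ᵥ w) := by
    intro w
    rw [hh, ← Nat.cast_smul_eq_nsmul ℝ, smul_dotProduct, smul_eq_mul]
  have hhJ0 : ∀ i ∈ J, h ⬝ᵥ v i = 0 := fun i hi => by rw [hdot, hg0J i hi, mul_zero]
  have hhneg : ∀ k, k ∉ J → h ⬝ᵥ v k = -(M : ℝ) := by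
    intro k hk
    rw [hdot, hg0neg k hk, hM]
    push_cast
    ring
  ext x
  constructor
  · intro hx
    rw [hΓ J] at hx
    simp only [Set.mem_iUnion, Set.mem_setOf_eq, Set.mem_inter_iff, SetLike.mem_coe] at hx
    obtain ⟨I, hIJ, hxG, hxC⟩ := hx
    rw [hC J I hIJ] at hxC
    obtain ⟨hx0, hxpos⟩ := hxC
    set S : ℝ := ∑ k, |x ⬝ᵥ v k| with hS
    have hSnonneg : 0 ≤ S := Finset.sum_nonneg fun k _ => abs_nonneg _
    obtain ⟨t, ht⟩ := exists_nat_gt S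
    have hbound : ∀ k, -(x ⬝ᵥ v k) ≤ S := by
      intro k
      calc -(x ⬝ᵥ v k) ≤ |x ⬝ᵥ v k| := neg_le_abs _
        _ ≤ S := Finset.single_le_sum (f := fun k => |x ⬝ᵥ v k|)
            (fun k _ => abs_nonneg _) (Finset.mem_univ k)
    set g : Fin n → ℝ := t • h with hg
    have hgGJ : g ∈ G J := AddSubgroup.nsmul_mem _ hhGJ t
    have hgdot : ∀ w, g ⬝ᵥ w = (t : ℝ) * (h ⬝ᵥ w) := by
      intro w
      rw [hg, ← Nat.cast_smul_eq_nsmul ℝ, smul_dotProduct, smul_eq_mul]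
    have hhGI : h ∈ G I := ((hGle I J hIJ) hhGJ).1
    have hγG : x - g ∈ G I :=
      AddSubgroup.sub_mem _ hxG (AddSubgroup.nsmul_mem _ hhGI t)
    have hγC : x - g ∈ C Finset.univ I := by
      rw [hC Finset.univ I (Finset.subset_univ I)]
      constructor
      · intro i hi
        rw [sub_dotProduct, hx0 i hi, hgdot, hhJ0 i (hIJ hi), mul_zero, sub_zero]
      · intro k hk
        rw [Finset.mem_sdiff] at hk
        by_cases hkJ : k ∈ J
        · have : 0 < x ⬝ᵥ v k := hxpos k (Finset.mem_sdiff.mpr ⟨hkJ, hk.2⟩)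
          rw [sub_dotProduct, hgdot, hhJ0 k hkJ, mul_zero, sub_zero]
          exact this
        · rw [sub_dotProduct, hgdot, hhneg k hkJ]
          have hM1 : (1:ℝ) ≤ (M:ℝ) := by exact_mod_cast hMpos
          have ht0 : (0:ℝ) ≤ (t:ℝ) := Nat.cast_nonneg t
          nlinarith [hbound k, ht, mul_le_mul_of_nonneg_left hM1 ht0]
    have hγΓ : x - g ∈ Γ Finset.univ := by
      rw [hΓ Finset.univ]
      simp only [Set.mem_iUnion, Set.mem_setOf_eq, Set.mem_inter_iff, SetLike.mem_coe]
      exact ⟨I, Finset.subset_univ I, hγG, hγC⟩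
    have := Set.add_mem_add hγΓ (SetLike.mem_coe.mpr hgGJ)
    simpa using this
  · intro hx
    obtain ⟨γ, hγ, g, hg, rfl⟩ := Set.mem_add.mp hx
    rw [hΓ Finset.univ] at hγ
    simp only [Set.mem_iUnion, Set.mem_setOf_eq, Set.mem_inter_iff, SetLike.mem_coe] at hγ
    obtain ⟨I, -, hγG, hγC⟩ := hγ
    rw [hC Finset.univ I (Finset.subset_univ I)] at hγC
    obtain ⟨hγ0, hγpos⟩ := hγC
    rw [hΓ J]
    simp only [Set.mem_iUnion, Set.mem_setOf_eq, Set.mem_inter_iff, SetLike.mem_coe]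
    refine ⟨I ∩ J, Finset.inter_subset_right, ?_, ?_⟩
    · have h1 : γ ∈ G (I ∩ J) := ((hGle (I ∩ J) I Finset.inter_subset_left) hγG).1
      have h2 : g ∈ G (I ∩ J) := ((hGle (I ∩ J) J Finset.inter_subset_right) hg).1
      exact AddSubgroup.add_mem _ h1 h2
    · have hgperp : ∀ i ∈ J, g ⬝ᵥ v i = 0 :=
        ((hGle J J (subset_refl J)) hg).2
      rw [hC J (I ∩ J) Finset.inter_subset_right]
      constructor
      · intro i hi
        rw [Finset.mem_inter] at hi
        rw [add_dotProduct, hγ0 i hi.1, hgperp i hi.2, add_zero]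
      · intro j hj
        rw [Finset.mem_sdiff, Finset.mem_inter] at hj
        have hjI : j ∉ I := fun hjI => hj.2 ⟨hjI, hj.1⟩
        have : 0 < γ ⬝ᵥ v j :=
          hγpos j (Finset.mem_sdiff.mpr ⟨Finset.mem_univ j, hjI⟩)
        rw [add_dotProduct, hgperp j hj.1, add_zero]
        exact this
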